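/- Let x ∈ Λ_I ⊂ Λ̄ and a = a_{ij} with j ∈ I and i ∉ I. Then f_x(a) = +∞, i.e. x does not lie in the closure (in Λ̄) of any half-space { z ∈ Λ : a(z) ≥ s }. -/
import Mathlib


open Set Pointwise Topology Filter

namespace CompApp

variable {n : ℕ}

/-- The component `Λ_I`: the quotient of the functions `I → ℝ` by the line of
constants (so `Λ_I = Σ_{i∈I} ℝ η_i^I` with the relation `Σ_{i∈I} η_i^I = 0`). -/
abbrev Comp (I : Finset (Fin n)) : Type :=
  (↥I → ℝ) ⧸ (Submodule.span ℝ {(1 : ↥I → ℝ)})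

/-- quotient map onto a component -/
noncomputable def mkC (I : Finset (Fin n)) : (↥I → ℝ) →ₗ[ℝ] Comp I :=
  Submodule.mkQ _

/-- The apartment `Λ` itself, i.e. the component for `I = {1,…,n}`. -/
abbrev Apt (n : ℕ) : Type := Comp (Finset.univ : Finset (Fin n))

/-- restriction of functions from `{1,…,n}` to `J` -/
def resL (J : Finset (Fin n)) :
    ((↥(Finset.univ : Finset (Fin n)) → ℝ)) →ₗ[ℝ] (↥J → ℝ) :=
  LinearMap.funLeft ℝ ℝ (fun j => ⟨j.1, Finset.mem_univ _⟩)

/-- The projection `r_J : Λ → Λ_J`, `Σ x_i η_i ↦ Σ_{i∈J} x_i η_i^J`. -/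
noncomputable def resQ (J : Finset (Fin n)) : Apt n →ₗ[ℝ] Comp J :=
  Submodule.mapQ _ _ (resL J) (by
    rw [Submodule.span_le]
    intro x hx
    rw [Set.mem_singleton_iff] at hx
    subst hx
    exact Submodule.mem_comap.mpr (Submodule.subset_span rfl))

variable [NeZero n]

/-- The compactified apartment `Λ̄ = ⋃_{∅≠I⊆{1,…,n}} Λ_I` as a set. -/
def CApt (n : ℕ) : Type := Σ I : {I : Finset (Fin n) // I.Nonempty}, Comp I.1

/-- The embedding `Λ ↪ Λ̄`. -/
def emb (z : Apt n) : CApt n := ⟨⟨Finset.univ, Finset.univ_nonempty⟩, z⟩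

/-- The point of the boundary component `Λ_I` inside `Λ̄`. -/
def embC (I : Finset (Fin n)) (hI : I.Nonempty) (y : Comp I) : CApt n := ⟨⟨I, hI⟩, y⟩

/-- The cone `D_I = Σ_{i∉I} ℝ_{≥0}(−η_i) ⊆ Λ`. -/
noncomputable def cone (I : Finset (Fin n)) : Set (Apt n) :=
  (mkC _) '' {x | (∀ l : ↥(Finset.univ : Finset (Fin n)), (l : Fin n) ∈ I → x l = 0) ∧
    ∀ l : ↥(Finset.univ : Finset (Fin n)), (l : Fin n) ∉ I → x l ≤ 0}

/-- The basic open set `C_U^I = ⋃_{I ⊆ J} r_J(U + D_I) ⊆ Λ̄`. -/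
noncomputable def CUI (U : Set (Apt n)) (I : Finset (Fin n)) : Set (CApt n) :=
  {p | I ⊆ p.1.1 ∧ p.2 ∈ resQ p.1.1 '' (U + cone I)}

/-- Boundedness for subsets of the apartment `Λ`. -/
def BoundedA (U : Set (Apt n)) : Prop :=
  ∃ t : Set (↥(Finset.univ : Finset (Fin n)) → ℝ),
    Bornology.IsBounded t ∧ U ⊆ (mkC _) '' t

/-- The topology of `Λ̄`: generated by the open subsets of `Λ` together with the
sets `C_U^I` for nonempty proper `I` and bounded open `U ⊆ Λ`. -/
noncomputable instance : TopologicalSpace (CApt n) :=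
  TopologicalSpace.generateFrom
    ({s | ∃ U : Set (Apt n), IsOpen U ∧ s = emb '' U} ∪
     {s | ∃ (U : Set (Apt n)) (I : Finset (Fin n)), I.Nonempty ∧ I ≠ Finset.univ ∧
        IsOpen U ∧ BoundedA U ∧ s = CUI U I})

/-- The root `a_{ij} = χ_i − χ_j` as a linear functional on `Λ`. -/
noncomputable def aFun (i j : Fin n) : Apt n →ₗ[ℝ] ℝ :=
  Submodule.liftQ _
    (LinearMap.proj (⟨i, Finset.mem_univ i⟩ : ↥(Finset.univ : Finset (Fin n))) -
      LinearMap.proj ⟨j, Finset.mem_univ j⟩) (by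
    rw [Submodule.span_le]
    intro x hx
    rw [Set.mem_singleton_iff] at hx
    subst hx
    simp [LinearMap.mem_ker])

/-- The root `b_{ij}` of the component `Λ_I` (for `i, j ∈ I`). -/
noncomputable def bFun (I : Finset (Fin n)) (i j : ↥I) : Comp I →ₗ[ℝ] ℝ :=
  Submodule.liftQ _
    (LinearMap.proj (R := ℝ) (φ := fun _ : ↥I => ℝ) i -
      LinearMap.proj (R := ℝ) (φ := fun _ : ↥I => ℝ) j) (by
    rw [Submodule.span_le]
    intro x hx
    rw [Set.mem_singleton_iff] at hx
    subst hx
    simp [LinearMap.mem_ker])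

/-- The closure in `Λ̄` of the half-space `{ z ∈ Λ : a_{ij}(z) ≥ s }`. -/
noncomputable def halfCl (i j : Fin n) (s : ℝ) : Set (CApt n) :=
  closure (emb '' {z : Apt n | s ≤ aFun i j z})

/-- `f_Ω(a) = inf{ t : Ω ⊆ closure{ z ∈ Λ : a(z) ≥ −t } } ∈ ℝ ∪ {±∞}`,
for `a = a_{ij}` (with `inf ∅ = +∞`). -/
noncomputable def fO (Ω : Set (CApt n)) (i j : Fin n) : EReal :=
  sInf {t : EReal | ∃ s : ℝ, t = (s : EReal) ∧ Ω ⊆ halfCl i j (-s)}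


lemma resQ_univ {n : ℕ} (z : Apt n) : resQ (Finset.univ : Finset (Fin n)) z = z := by
  obtain ⟨x, rfl⟩ := Submodule.mkQ_surjective _ z
  rw [show (Submodule.mkQ _ x : Apt n) = Submodule.Quotient.mk x from rfl]
  rw [resQ, Submodule.mapQ_apply]
  rfl

lemma aFun_mk {n : ℕ} (i j : Fin n) (w : ↥(Finset.univ : Finset (Fin n)) → ℝ) :
    aFun i j (mkC _ w) = w ⟨i, Finset.mem_univ i⟩ - w ⟨j, Finset.mem_univ j⟩ := by
  rw [mkC, Submodule.mkQ_apply, aFun, Submodule.liftQ_apply]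
  simp

lemma isOpen_mkC_image {n : ℕ} (s : Set (↥(Finset.univ : Finset (Fin n)) → ℝ))
    (hs : IsOpen s) : IsOpen (mkC (Finset.univ : Finset (Fin n)) '' s) :=
  Submodule.isOpenMap_mkQ _ _ hs

/-- Let `x ∈ Λ_I ⊂ Λ̄` and `a = a_{ij}` with `j ∈ I` and `i ∉ I`.  Then
`f_x(a) = +∞`, i.e. `x` does not lie in the closure (in `Λ̄`) of any half-space
`{ z ∈ Λ : a(z) ≥ s }`. -/
theorem fO_eq_top_of_mem_not_mem {n : ℕ} [NeZero n]
    (I : Finset (Fin n)) (hI : I.Nonempty) (y : Comp I)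
    (i j : Fin n) (hij : i ≠ j) (hjI : j ∈ I) (hiI : i ∉ I) :
    fO {embC I hI y} i j = ⊤ ∧
      ∀ s : ℝ, embC I hI y ∉ halfCl i j s := by
  have hInotuniv : I ≠ Finset.univ := fun h => hiI (h ▸ Finset.mem_univ i)
  obtain ⟨y₀, hy₀⟩ := Submodule.mkQ_surjective _ y
  set i' : ↥(Finset.univ : Finset (Fin n)) := ⟨i, Finset.mem_univ i⟩ with hi'
  set j' : ↥(Finset.univ : Finset (Fin n)) := ⟨j, Finset.mem_univ j⟩ with hj'
  have key : ∀ s : ℝ, embC I hI y ∉ halfCl i j s := by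
    intro s hmem
    set v : ↥(Finset.univ : Finset (Fin n)) → ℝ :=
      fun l => if h : (l : Fin n) ∈ I then y₀ ⟨l, h⟩ else s + y₀ ⟨j, hjI⟩ - 3 with hv
    set U : Set (Apt n) := mkC _ '' Metric.ball v 1 with hU
    have hUopen : IsOpen U := isOpen_mkC_image _ Metric.isOpen_ball
    have hUbdd : BoundedA U := ⟨Metric.ball v 1, Metric.isBounded_ball, subset_rfl⟩
    have hVopen : IsOpen (CUI U I) :=
      TopologicalSpace.isOpen_generateFrom_of_mem
        (Or.inr ⟨U, I, hI, hInotuniv, hUopen, hUbdd, rfl⟩)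
    have hxV : embC I hI y ∈ CUI U I := by
      refine ⟨subset_rfl, mkC _ v + 0,
        Set.add_mem_add ⟨v, Metric.mem_ball_self one_pos, rfl⟩
          ⟨0, ⟨fun l _ => rfl, fun l _ => le_refl 0⟩, map_zero _⟩, ?_⟩
      rw [map_add, map_zero, add_zero]
      show resQ I ((mkC _) v) = y
      rw [mkC, Submodule.mkQ_apply, resQ, Submodule.mapQ_apply, ← hy₀,
        Submodule.mkQ_apply]
      congr 1
      funext l
      show v ⟨l.1, Finset.mem_univ _⟩ = y₀ l
      simp only [hv]
      rw [dif_pos l.2]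
    rw [halfCl, mem_closure_iff] at hmem
    obtain ⟨p, hpV, hpS⟩ := hmem _ hVopen hxV
    obtain ⟨z, hz, rfl⟩ := hpS
    obtain ⟨-, w, hw, hwz⟩ := hpV
    have hwz2 : w = z := by rw [← resQ_univ w]; exact hwz
    subst hwz2
    obtain ⟨u, hu, d, hd, rfl⟩ := Set.mem_add.mp hw
    obtain ⟨w₀, hball, rfl⟩ := hu
    obtain ⟨x₀, ⟨hx0I, hx0le⟩, rfl⟩ := hd
    have h1 : aFun i j (mkC _ w₀ + mkC _ x₀)
        = (w₀ i' - w₀ j') + (x₀ i' - x₀ j') := by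
      rw [map_add, aFun_mk, aFun_mk]
    have hxj : x₀ j' = 0 := hx0I j' hjI
    have hxi : x₀ i' ≤ 0 := hx0le i' hiI
    have hdist : dist w₀ v < 1 := Metric.mem_ball.mp hball
    have hdi : dist (w₀ i') (v i') < 1 := lt_of_le_of_lt (dist_le_pi_dist w₀ v i') hdist
    have hdj : dist (w₀ j') (v j') < 1 := lt_of_le_of_lt (dist_le_pi_dist w₀ v j') hdist
    rw [Real.dist_eq, abs_lt] at hdi hdj
    have hvi : v i' = s + y₀ ⟨j, hjI⟩ - 3 := by simp only [hv]; rw [dif_neg hiI]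
    have hvj : v j' = y₀ ⟨j, hjI⟩ := by simp only [hv]; rw [dif_pos hjI]
    simp only [Set.mem_setOf_eq] at hz
    rw [h1] at hz
    rw [hvi] at hdi
    rw [hvj] at hdj
    obtain ⟨hdi1, hdi2⟩ := hdi
    obtain ⟨hdj1, hdj2⟩ := hdj
    linarith
  refine ⟨?_, key⟩
  have hempty : {t : EReal | ∃ s : ℝ, t = (s : EReal) ∧
      ({embC I hI y} : Set (CApt n)) ⊆ halfCl i j (-s)} = ∅ := by
    apply Set.eq_empty_iff_forall_notMem.mpr
    rintro t ⟨s, rfl, hsub⟩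
    exact key (-s) (hsub (Set.mem_singleton _))
  rw [fO, hempty, sInf_empty]

end CompApp
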